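/- Let c(Y,A,Z) ∈ L²(P) and suppose Y ⟂ Z | A=1. The projection of c onto the space Λ^⊥ = {A(Z−E[Z|A=1])(d(Y)−E[d(Y)|A=1])} is given by c^⊥ = A(Z−E[Z|A=1])(c*(Y)−E[c*(Y)|A=1]) with c*(Y) = E[c(Y,A,Z)(Z−E[Z|A=1]) | Y, A=1] / E[(Z−E[Z|A=1])² | A=1]. -/

import Mathlib

open MeasureTheory

/-- Projection formula onto
`Λ^⊥ = {A(Z−E[Z|A=1])(d(Y)−E[d(Y)|A=1])}`: given `c ∈ L²(P)` and `Y ⟂ Z | A=1`, the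
projection of `c` onto `Λ^⊥` is `c^⊥ = A(Z−E[Z|A=1])(c*(Y)−E[c*(Y)|A=1])` with
`c*(Y) = E[c·(Z−E[Z|A=1]) | Y, A=1] / E[(Z−E[Z|A=1])² | A=1]`.

Conditioning on the event `A=1` is encoded by `E[f|A=1] = E[fA]/E[A]`; the defining
property of `c*` (hypothesis `hcstar`) states that `c*(Y)·v` is a version of the
conditional expectation `E[c·(Z−mZ) | Y, A=1]` where `v = E[(Z−mZ)²|A=1]`; conditional
independence is encoded by `hindep`.  The conclusion states that `c − c^⊥` is orthogonal
to every element `A(Z−mZ)(d(Y)−E[d(Y)|A=1])` of `Λ^⊥` (with `d` bounded measurable),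
i.e. `c^⊥` is the orthogonal projection of `c` onto `Λ^⊥` in `L²(P)`. -/
theorem projection_onto_orthocomplement
    (Ω : Type*) [MeasurableSpace Ω] (μ : Measure Ω) [IsProbabilityMeasure μ]
    (A Z Y : Ω → ℝ) (hAm : Measurable A) (hZm : Measurable Z) (hYm : Measurable Y)
    (hA : ∀ ω, A ω = 0 ∨ A ω = 1) (hZ : ∀ ω, Z ω = 0 ∨ Z ω = 1)
    (hPA : 0 < ∫ ω, A ω ∂μ)
    (hindep : ∀ s t : Set ℝ, MeasurableSet s → MeasurableSet t →
      μ ({ω | Y ω ∈ s} ∩ {ω | Z ω ∈ t} ∩ {ω | A ω = 1}) * μ {ω | A ω = 1}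
        = μ ({ω | Y ω ∈ s} ∩ {ω | A ω = 1}) * μ ({ω | Z ω ∈ t} ∩ {ω | A ω = 1}))
    (c : Ω → ℝ) (hc : MemLp c 2 μ) (hcm : Measurable c)
    (mZ v mc : ℝ)
    (hmZ : mZ = (∫ ω, A ω * Z ω ∂μ) / (∫ ω, A ω ∂μ))
    (hv : v = (∫ ω, A ω * (Z ω - mZ) ^ 2 ∂μ) / (∫ ω, A ω ∂μ))
    (hvpos : 0 < v)
    (cstar : ℝ → ℝ) (hcstarm : Measurable cstar)
    (hcstar2 : MemLp (fun ω => cstar (Y ω)) 2 μ)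
    (hmc : mc = (∫ ω, A ω * cstar (Y ω) ∂μ) / (∫ ω, A ω ∂μ))
    -- defining property of c*: c*(Y)·v is a version of E[c·(Z−mZ) | Y, A=1]
    (hcstar : ∀ d : ℝ → ℝ, Measurable d → (∃ Cd : ℝ, ∀ y, |d y| ≤ Cd) →
      ∫ ω, A ω * c ω * (Z ω - mZ) * d (Y ω) ∂μ
        = ∫ ω, A ω * cstar (Y ω) * v * d (Y ω) ∂μ) :
    ∀ d : ℝ → ℝ, Measurable d → (∃ Cd : ℝ, ∀ y, |d y| ≤ Cd) →
      ∫ ω, (c ω - A ω * (Z ω - mZ) * (cstar (Y ω) - mc))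
          * (A ω * (Z ω - mZ)
              * (d (Y ω) - (∫ ω', A ω' * d (Y ω') ∂μ) / (∫ ω', A ω' ∂μ))) ∂μ = 0 := by
  intro d hdm hdb
  obtain ⟨Cd, hCd⟩ := hdb
  have hAne : (∫ ω, A ω ∂μ) ≠ 0 := ne_of_gt hPA
  set md : ℝ := (∫ ω', A ω' * d (Y ω') ∂μ) / (∫ ω', A ω' ∂μ) with hmd
  -- basic bounds
  have hAb : ∀ ω, |A ω| ≤ 1 := fun ω => by rcases hA ω with h | h <;> simp [h]
  have hZb : ∀ ω, |Z ω| ≤ 1 := fun ω => by rcases hZ ω with h | h <;> simp [h]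
  have hZmb : ∀ ω, |Z ω - mZ| ≤ 1 + |mZ| := fun ω =>
    (abs_sub _ _).trans (by linarith [hZb ω])
  have hdb : ∀ y, |d y - md| ≤ Cd + |md| := fun y =>
    (abs_sub _ _).trans (by linarith [hCd y])
  have hCd0 : (0:ℝ) ≤ Cd := (abs_nonneg _).trans (hCd 0)
  -- integrability of bounded measurable functions
  have intbdd : ∀ (h : Ω → ℝ) (C : ℝ), Measurable h → (∀ ω, |h ω| ≤ C) →
      Integrable h μ := by
    intro h C hm hC
    exact (memLp_top_of_bound hm.aestronglyMeasurable C
      (Filter.Eventually.of_forall fun ω => by simpa using hC ω)).integrable le_top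
  -- product of an integrable and bounded measurable function
  have mulInt : ∀ (g h : Ω → ℝ) (C : ℝ), Integrable h μ → Measurable g →
      (∀ ω, |g ω| ≤ C) → Integrable (fun ω => h ω * g ω) μ := by
    intro g h C hh hg hC
    exact (Integrable.bdd_mul hh hg.aestronglyMeasurable
      (Filter.Eventually.of_forall fun ω => by simpa using hC ω)).congr
      (Filter.Eventually.of_forall fun ω => mul_comm _ _)
  have habs3 : ∀ (a b c' Ca Cb Cc : ℝ), |a| ≤ Ca → |b| ≤ Cb → |c'| ≤ Cc →
      |a * b * c'| ≤ Ca * Cb * Cc := by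
    intro a b c' Ca Cb Cc ha hb hc
    have hCa : 0 ≤ Ca := (abs_nonneg _).trans ha
    have hCb : 0 ≤ Cb := (abs_nonneg _).trans hb
    calc |a * b * c'| = |a| * |b| * |c'| := by rw [abs_mul, abs_mul]
      _ ≤ Ca * Cb * Cc :=
        mul_le_mul (mul_le_mul ha hb (abs_nonneg _) hCa) hc (abs_nonneg _)
          (mul_nonneg hCa hCb)
  -- integrable pieces
  have intc : Integrable c μ := hc.integrable one_le_two
  have intcs : Integrable (fun ω => cstar (Y ω)) μ := hcstar2.integrable one_le_two
  have intcs' : Integrable (fun ω => cstar (Y ω) - mc) μ := intcs.sub (integrable_const mc)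
  have intA : Integrable A μ := intbdd A 1 hAm hAb
  have intAZ : Integrable (fun ω => A ω * Z ω) μ :=
    intbdd _ 1 (hAm.mul hZm) (fun ω => by
      rw [abs_mul]
      simpa using mul_le_mul (hAb ω) (hZb ω) (abs_nonneg _) zero_le_one)
  -- the key conditional independence identity extended to measurable f
  have key : ∀ f : ℝ → ℝ, Measurable f →
      (∫ ω, A ω ∂μ) * (∫ ω, A ω * Z ω * f (Y ω) ∂μ)
        = (∫ ω, A ω * Z ω ∂μ) * (∫ ω, A ω * f (Y ω) ∂μ) := by
    intro f hf
    set S : Set Ω := A ⁻¹' {1} with hSdef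
    set T : Set Ω := Z ⁻¹' {1} with hTdef
    have hS : MeasurableSet S := hAm (measurableSet_singleton 1)
    have hT : MeasurableSet T := hZm (measurableSet_singleton 1)
    have hST : MeasurableSet (S ∩ T) := hS.inter hT
    have hmeq : μ S • (μ.restrict (S ∩ T)).map Y = μ (S ∩ T) • (μ.restrict S).map Y := by
      ext s hs
      rw [Measure.smul_apply, Measure.smul_apply, Measure.map_apply hYm hs,
        Measure.map_apply hYm hs, Measure.restrict_apply (hYm hs),
        Measure.restrict_apply (hYm hs)]
      have h := hindep s {1} hs (measurableSet_singleton 1)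
      have e1 : {ω | Y ω ∈ s} ∩ {ω | Z ω ∈ ({1} : Set ℝ)} ∩ {ω | A ω = 1}
          = Y ⁻¹' s ∩ (S ∩ T) := by
        ext ω
        simp only [Set.mem_inter_iff, Set.mem_setOf_eq, Set.mem_preimage,
          Set.mem_singleton_iff, hSdef, hTdef]
        tauto
      have e2 : {ω | Y ω ∈ s} ∩ {ω | A ω = 1} = Y ⁻¹' s ∩ S := by
        ext ω
        simp [Set.mem_preimage, Set.mem_singleton_iff, hSdef]
      have e3 : {ω | Z ω ∈ ({1} : Set ℝ)} ∩ {ω | A ω = 1} = S ∩ T := by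
        ext ω
        simp only [Set.mem_inter_iff, Set.mem_setOf_eq, Set.mem_preimage,
          Set.mem_singleton_iff, hSdef, hTdef]
        tauto
      have e4 : {ω | A ω = 1} = S := by
        ext ω; simp [hSdef]
      rw [e1, e2, e3, e4] at h
      simp only [smul_eq_mul]
      rw [mul_comm (μ S) _, mul_comm (μ (S ∩ T)) _]
      exact h
    have hmemS : ∀ ω, ω ∈ S ↔ A ω = 1 := fun ω => Iff.rfl
    have hmemT : ∀ ω, ω ∈ T ↔ Z ω = 1 := fun ω => Iff.rfl
    have hI1 : ∫ y, f y ∂((μ.restrict (S ∩ T)).map Y) = ∫ ω, A ω * Z ω * f (Y ω) ∂μ := by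
      rw [integral_map hYm.aemeasurable hf.aestronglyMeasurable,
        ← integral_indicator hST]
      refine integral_congr_ae (Filter.Eventually.of_forall fun ω => ?_)
      by_cases hmem : ω ∈ S ∩ T
      · have h1 : A ω = 1 := (hmemS ω).mp hmem.1
        have h2 : Z ω = 1 := (hmemT ω).mp hmem.2
        simp [Set.indicator_of_mem hmem, h1, h2]
      · have hz : A ω * Z ω = 0 := by
          rcases hA ω with h | h
          · simp [h]
          rcases hZ ω with h2 | h2
          · simp [h2]
          exact absurd ⟨(hmemS ω).mpr h, (hmemT ω).mpr h2⟩ hmem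
        simp [Set.indicator_of_notMem hmem, hz]
    have hI2 : ∫ y, f y ∂((μ.restrict S).map Y) = ∫ ω, A ω * f (Y ω) ∂μ := by
      rw [integral_map hYm.aemeasurable hf.aestronglyMeasurable,
        ← integral_indicator hS]
      refine integral_congr_ae (Filter.Eventually.of_forall fun ω => ?_)
      by_cases hmem : ω ∈ S
      · simp [Set.indicator_of_mem hmem, (hmemS ω).mp hmem]
      · have hz : A ω = 0 := by
          rcases hA ω with h | h
          · exact h
          exact absurd ((hmemS ω).mpr h) hmem
        simp [Set.indicator_of_notMem hmem, hz]
    have hμS : (μ S).toReal = ∫ ω, A ω ∂μ := by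
      rw [← measureReal_def, ← integral_indicator_one hS]
      refine integral_congr_ae (Filter.Eventually.of_forall fun ω => ?_)
      by_cases hmem : ω ∈ S
      · simp [Set.indicator_of_mem hmem, (hmemS ω).mp hmem]
      · have hz : A ω = 0 := by
          rcases hA ω with h | h
          · exact h
          exact absurd ((hmemS ω).mpr h) hmem
        simp [Set.indicator_of_notMem hmem, hz]
    have hμST : (μ (S ∩ T)).toReal = ∫ ω, A ω * Z ω ∂μ := by
      rw [← measureReal_def, ← integral_indicator_one hST]
      refine integral_congr_ae (Filter.Eventually.of_forall fun ω => ?_)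
      by_cases hmem : ω ∈ S ∩ T
      · simp [Set.indicator_of_mem hmem, (hmemS ω).mp hmem.1, (hmemT ω).mp hmem.2]
      · have hz : A ω * Z ω = 0 := by
          rcases hA ω with h | h
          · simp [h]
          rcases hZ ω with h2 | h2
          · simp [h2]
          exact absurd ⟨(hmemS ω).mpr h, (hmemT ω).mpr h2⟩ hmem
        simp [Set.indicator_of_notMem hmem, hz]
    have h5 : ∫ y, f y ∂(μ S • (μ.restrict (S ∩ T)).map Y)
        = ∫ y, f y ∂(μ (S ∩ T) • (μ.restrict S).map Y) := by rw [hmeq]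
    rw [integral_smul_measure, integral_smul_measure, hI1, hI2, smul_eq_mul,
      smul_eq_mul, hμS, hμST] at h5
    exact h5
  -- apply hcstar to d − md
  have hstep1 := hcstar (fun y => d y - md) (hdm.sub measurable_const)
    ⟨Cd + |md|, hdb⟩
  -- ∫ A Z = mZ ∫ A
  have hAZeq : (∫ ω, A ω * Z ω ∂μ) = mZ * ∫ ω, A ω ∂μ := by
    rw [hmZ]; field_simp
  -- ∫ A (d − md) = 0
  have intAd : Integrable (fun ω => A ω * d (Y ω)) μ :=
    intbdd _ (1 * Cd) (hAm.mul (hdm.comp hYm)) (fun ω => by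
      rw [abs_mul]
      exact mul_le_mul (hAb ω) (hCd (Y ω)) (abs_nonneg _) zero_le_one)
  have hAd' : ∫ ω, A ω * (d (Y ω) - md) ∂μ = 0 := by
    have : ∀ ω, A ω * (d (Y ω) - md) = A ω * d (Y ω) - md * A ω := fun ω => by ring
    rw [integral_congr_ae (Filter.Eventually.of_forall this),
      integral_sub intAd (intA.const_mul md), integral_const_mul _ _]
    rw [hmd]; field_simp; simp
  -- v = mZ − mZ²
  have hveq : v = mZ - mZ ^ 2 := by
    have hpt : ∀ ω, A ω * (Z ω - mZ) ^ 2
        = (1 - 2 * mZ) * (A ω * Z ω) + mZ ^ 2 * A ω := fun ω => by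
      rcases hZ ω with h | h <;> rw [h] <;> ring
    have : ∫ ω, A ω * (Z ω - mZ) ^ 2 ∂μ = (mZ - mZ ^ 2) * ∫ ω, A ω ∂μ := by
      rw [integral_congr_ae (Filter.Eventually.of_forall hpt),
        integral_add (intAZ.const_mul _) (intA.const_mul _),
        integral_const_mul _ _, integral_const_mul _ _, hAZeq]
      ring
    rw [hv, this]
    field_simp
  -- more integrable pieces
  have meas_d' : Measurable (fun ω => d (Y ω) - md) := (hdm.comp hYm).sub measurable_const
  have meas_Zm : Measurable (fun ω => Z ω - mZ) := hZm.sub measurable_const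
  -- ∫ A Z f(Y) = mZ ∫ A f(Y) for fg
  set fg : ℝ → ℝ := fun y => (cstar y - mc) * (d y - md) with hfgdef
  have hfgm : Measurable fg := (hcstarm.sub measurable_const).mul (hdm.sub measurable_const)
  have intAZfg : Integrable (fun ω => A ω * Z ω * fg (Y ω)) μ := by
    refine (mulInt (fun ω => A ω * Z ω * (d (Y ω) - md)) (fun ω => cstar (Y ω) - mc)
      (1 * 1 * (Cd + |md|)) intcs' ((hAm.mul hZm).mul meas_d') (fun ω =>
        habs3 _ _ _ _ _ _ (hAb ω) (hZb ω) (hdb (Y ω)))).congr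
      (Filter.Eventually.of_forall fun ω => ?_)
    simp only [hfgdef]; ring
  have intAfg : Integrable (fun ω => A ω * fg (Y ω)) μ := by
    refine (mulInt (fun ω => A ω * (d (Y ω) - md)) (fun ω => cstar (Y ω) - mc)
      (1 * (Cd + |md|)) intcs' (hAm.mul meas_d') (fun ω => by
        rw [abs_mul]
        exact mul_le_mul (hAb ω) (hdb (Y ω)) (abs_nonneg _) zero_le_one)).congr
      (Filter.Eventually.of_forall fun ω => ?_)
    simp only [hfgdef]; ring
  have hAZfg : ∫ ω, A ω * Z ω * fg (Y ω) ∂μ = mZ * ∫ ω, A ω * fg (Y ω) ∂μ := by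
    have h := key fg hfgm
    rw [hAZeq] at h
    have h2 : (∫ ω, A ω ∂μ) * (∫ ω, A ω * Z ω * fg (Y ω) ∂μ)
        = (∫ ω, A ω ∂μ) * (mZ * ∫ ω, A ω * fg (Y ω) ∂μ) := by
      rw [h]; ring
    exact mul_left_cancel₀ hAne h2
  -- Q = ∫ A (Z−mZ)² fg(Y) = v ∫ A fg(Y)
  have hQ : ∫ ω, A ω * (Z ω - mZ) ^ 2 * fg (Y ω) ∂μ = v * ∫ ω, A ω * fg (Y ω) ∂μ := by
    have hpt : ∀ ω, A ω * (Z ω - mZ) ^ 2 * fg (Y ω)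
        = (1 - 2 * mZ) * (A ω * Z ω * fg (Y ω)) + mZ ^ 2 * (A ω * fg (Y ω)) := fun ω => by
      rcases hZ ω with h | h <;> rw [h] <;> ring
    rw [integral_congr_ae (Filter.Eventually.of_forall hpt),
      integral_add (intAZfg.const_mul _) (intAfg.const_mul _),
      integral_const_mul _ _, integral_const_mul _ _, hAZfg, hveq]
    ring
  -- ∫ A fg(Y) = ∫ A cstar(Y) (d−md)
  have intAcsd : Integrable (fun ω => A ω * cstar (Y ω) * (d (Y ω) - md)) μ := by
    refine (mulInt (fun ω => A ω * (d (Y ω) - md)) (fun ω => cstar (Y ω))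
      (1 * (Cd + |md|)) intcs (hAm.mul meas_d') (fun ω => by
        rw [abs_mul]
        exact mul_le_mul (hAb ω) (hdb (Y ω)) (abs_nonneg _) zero_le_one)).congr
      (Filter.Eventually.of_forall fun ω => by ring)
  have intAd' : Integrable (fun ω => A ω * (d (Y ω) - md)) μ :=
    intbdd _ (1 * (Cd + |md|)) (hAm.mul meas_d') (fun ω => by
      rw [abs_mul]
      exact mul_le_mul (hAb ω) (hdb (Y ω)) (abs_nonneg _) zero_le_one)
  have hAfg : ∫ ω, A ω * fg (Y ω) ∂μ
      = ∫ ω, A ω * cstar (Y ω) * (d (Y ω) - md) ∂μ := by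
    have hpt : ∀ ω, A ω * fg (Y ω)
        = A ω * cstar (Y ω) * (d (Y ω) - md) - mc * (A ω * (d (Y ω) - md)) := fun ω => by
      simp only [hfgdef]; ring
    rw [integral_congr_ae (Filter.Eventually.of_forall hpt),
      integral_sub intAcsd (intAd'.const_mul _), integral_const_mul _ _, hAd']
    ring
  -- RHS of hstep1
  have hR1 : ∫ ω, A ω * cstar (Y ω) * v * (d (Y ω) - md) ∂μ
      = v * ∫ ω, A ω * cstar (Y ω) * (d (Y ω) - md) ∂μ := by
    have hpt : ∀ ω, A ω * cstar (Y ω) * v * (d (Y ω) - md)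
        = v * (A ω * cstar (Y ω) * (d (Y ω) - md)) := fun ω => by ring
    rw [integral_congr_ae (Filter.Eventually.of_forall hpt), integral_const_mul _ _]
  -- main expansion
  have int1 : Integrable (fun ω => A ω * c ω * (Z ω - mZ) * (d (Y ω) - md)) μ := by
    refine (mulInt (fun ω => A ω * (Z ω - mZ) * (d (Y ω) - md)) c
      (1 * (1 + |mZ|) * (Cd + |md|)) intc ((hAm.mul meas_Zm).mul meas_d') (fun ω =>
        habs3 _ _ _ _ _ _ (hAb ω) (hZmb ω) (hdb (Y ω)))).congr
      (Filter.Eventually.of_forall fun ω => by ring)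
  have int2 : Integrable (fun ω => A ω * (Z ω - mZ) ^ 2 * fg (Y ω)) μ := by
    refine (mulInt (fun ω => A ω * (Z ω - mZ) ^ 2 * (d (Y ω) - md))
      (fun ω => cstar (Y ω) - mc)
      (1 * (1 + |mZ|) ^ 2 * (Cd + |md|)) intcs'
      ((hAm.mul (meas_Zm.pow_const 2)).mul meas_d') (fun ω => by
        refine habs3 _ _ _ _ _ _ (hAb ω) ?_ (hdb (Y ω))
        rw [abs_pow]
        exact pow_le_pow_left₀ (abs_nonneg _) (hZmb ω) 2)).congr
      (Filter.Eventually.of_forall fun ω => ?_)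
    simp only [hfgdef]; ring
  have hexp : ∀ ω, (c ω - A ω * (Z ω - mZ) * (cstar (Y ω) - mc))
      * (A ω * (Z ω - mZ) * (d (Y ω) - md))
      = A ω * c ω * (Z ω - mZ) * (d (Y ω) - md)
        - A ω * (Z ω - mZ) ^ 2 * fg (Y ω) := fun ω => by
    simp only [hfgdef]
    rcases hA ω with h | h <;> rw [h] <;> ring
  rw [integral_congr_ae (Filter.Eventually.of_forall hexp), integral_sub int1 int2,
    hstep1, hQ, hAfg, hR1, sub_self]
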